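/- For positive definite n×n real symmetric matrices A and B and any t ∈ [0,1]: log det(tA + (1-t)B) ≥ t·log det(A) + (1-t)·log det(B) + [t(1-t)/(2·max{λmax(A)², λmax(B)²})]·‖A-B‖_F², where λmax denotes the largest eigenvalue and ‖·‖_F the Frobenius norm. -/

import Mathlib

open Matrix


variable {n : ℕ}

lemma psd_trace_nonneg {M : Matrix (Fin n) (Fin n) ℝ} (hM : M.PosSemidef) :
    0 ≤ Matrix.trace M := by
  apply Finset.sum_nonneg
  intro i _
  simpa using hM.dotProduct_mulVec_nonneg (Pi.single i 1)

open scoped MatrixOrder in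
lemma psd_trace_mul_nonneg {S T : Matrix (Fin n) (Fin n) ℝ} (hS : S.PosSemidef)
    (hT : T.PosSemidef) : 0 ≤ Matrix.trace (S * T) := by
  obtain ⟨W, hherm, hmul⟩ : ∃ W : Matrix (Fin n) (Fin n) ℝ, W.IsHermitian ∧ W * W = S :=
    ⟨CFC.sqrt S, (CFC.sqrt_nonneg S).posSemidef.1, CFC.sqrt_mul_sqrt_self S hS.nonneg⟩
  have h2 : Matrix.trace (S * T) = Matrix.trace (W * T * Wᴴ) := by
    rw [hherm, ← hmul, Matrix.mul_assoc, Matrix.trace_mul_comm, Matrix.mul_assoc]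
  rw [h2]
  exact psd_trace_nonneg (hT.mul_mul_conjTranspose_same _)

lemma trace_expand {S T : Matrix (Fin n) (Fin n) ℝ} {K : ℝ}
    (h : 0 ≤ Matrix.trace (S * (K • 1 - T))) :
    Matrix.trace (S * T) ≤ K * Matrix.trace S := by
  rw [Matrix.mul_sub, Matrix.trace_sub, mul_smul_comm, Matrix.mul_one, Matrix.trace_smul,
    smul_eq_mul, sub_nonneg] at h
  exact h

lemma key_trace_ineq {Z C : Matrix (Fin n) (Fin n) ℝ} (hZ : Z.PosSemidef)
    (hC : C.IsHermitian) {K : ℝ} (hK : 0 ≤ K) (hZK : (K • 1 - Z).PosSemidef) :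
    Matrix.trace (Z * C * Z * C) ≤ K ^ 2 * Matrix.trace (C * C) := by
  have hCC : (C * C).PosSemidef := by
    have := Matrix.posSemidef_self_mul_conjTranspose C
    rwa [hC.eq] at this
  have hCZC : (C * Z * C).PosSemidef := by
    have := hZ.conjTranspose_mul_mul_same C
    rwa [hC.eq] at this
  have step2 : Matrix.trace ((C * C) * Z) ≤ K * Matrix.trace (C * C) :=
    trace_expand (psd_trace_mul_nonneg hCC hZK)
  have step1 : Matrix.trace ((C * Z * C) * Z) ≤ K * Matrix.trace (C * Z * C) :=
    trace_expand (psd_trace_mul_nonneg hCZC hZK)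
  have e1 : Matrix.trace (Z * C * Z * C) = Matrix.trace ((C * Z * C) * Z) := by
    rw [Matrix.trace_mul_comm, Matrix.mul_assoc, Matrix.mul_assoc, Matrix.mul_assoc]
  have e2 : Matrix.trace (C * Z * C) = Matrix.trace ((C * C) * Z) := by
    rw [Matrix.trace_mul_cycle]
  calc Matrix.trace (Z * C * Z * C) = Matrix.trace ((C * Z * C) * Z) := e1
    _ ≤ K * Matrix.trace (C * Z * C) := step1
    _ = K * Matrix.trace ((C * C) * Z) := by rw [e2]
    _ ≤ K * (K * Matrix.trace (C * C)) := by
        exact mul_le_mul_of_nonneg_left step2 hK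
    _ = K ^ 2 * Matrix.trace (C * C) := by ring

variable {n : ℕ} {C : Matrix (Fin n) (Fin n) ℝ}

lemma conj_unitary_form (hC : C.IsHermitian) (a b : ℝ) :
    a • 1 + b • C = (hC.eigenvectorUnitary : Matrix (Fin n) (Fin n) ℝ) *
      diagonal (fun i => a + b * hC.eigenvalues i) *
      (star (hC.eigenvectorUnitary : Matrix (Fin n) (Fin n) ℝ)) := by
  set U := (hC.eigenvectorUnitary : Matrix (Fin n) (Fin n) ℝ)
  have hU1 : U * star U = 1 := Matrix.mem_unitaryGroup_iff.mp hC.eigenvectorUnitary.2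
  have hdiag : diagonal (fun i => a + b * hC.eigenvalues i)
      = a • (1 : Matrix (Fin n) (Fin n) ℝ) + b • diagonal (RCLike.ofReal ∘ hC.eigenvalues) := by
    ext i j
    by_cases h : i = j
    · subst h; simp [Matrix.diagonal_apply_eq, Matrix.one_apply_eq]
    · simp [Matrix.diagonal_apply_ne _ h, Matrix.one_apply_ne h]
  rw [hdiag, Matrix.mul_add, Matrix.add_mul, mul_smul_comm, smul_mul_assoc,
    mul_smul_comm, smul_mul_assoc, Matrix.mul_one, hU1, ← Unitary.conjStarAlgAut_apply (S := ℝ), ← hC.spectral_theorem]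

lemma det_aff (hC : C.IsHermitian) (a b : ℝ) :
    (a • 1 + b • C).det = ∏ i, (a + b * hC.eigenvalues i) := by
  set U := (hC.eigenvectorUnitary : Matrix (Fin n) (Fin n) ℝ)
  have hU1 : U * star U = 1 := Matrix.mem_unitaryGroup_iff.mp hC.eigenvectorUnitary.2
  have hdetU : U.det * (star U).det = 1 := by rw [← Matrix.det_mul, hU1, Matrix.det_one]
  rw [conj_unitary_form hC a b, Matrix.det_mul, Matrix.det_mul]
  calc U.det * (diagonal fun i => a + b * hC.eigenvalues i).det * (star U).det
      = (diagonal fun i => a + b * hC.eigenvalues i).det * (U.det * (star U).det) := by ring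
    _ = ∏ i, (a + b * hC.eigenvalues i) := by rw [hdetU, mul_one, Matrix.det_diagonal]

lemma trace_sq_eq (hC : C.IsHermitian) :
    Matrix.trace (C * C) = ∑ i, (hC.eigenvalues i) ^ 2 := by
  set U := (hC.eigenvectorUnitary : Matrix (Fin n) (Fin n) ℝ)
  set D : Matrix (Fin n) (Fin n) ℝ := diagonal (RCLike.ofReal ∘ hC.eigenvalues) with hD
  have hU2 : star U * U = 1 := by
    have := hC.eigenvectorUnitary.2
    rw [Unitary.mem_iff] at this
    exact this.1
  have hC2 : C * C = U * (D * D) * star U := by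
    conv_lhs => rw [hC.spectral_theorem, Unitary.conjStarAlgAut_apply]
    rw [← hD]
    calc U * D * star U * (U * D * star U)
        = U * (D * ((star U * U) * (D * star U))) := by
          simp only [Matrix.mul_assoc]
      _ = U * (D * D) * star U := by
          rw [hU2, Matrix.one_mul]
          simp only [Matrix.mul_assoc]
  rw [hC2, Matrix.trace_mul_cycle, hU2, Matrix.one_mul, hD]
  rw [Matrix.diagonal_mul_diagonal, Matrix.trace_diagonal]
  simp [sq]

lemma loewner_of_eig_le (hC : C.IsHermitian) {K : ℝ} (h : ∀ i, hC.eigenvalues i ≤ K) :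
    (K • 1 - C).PosSemidef := by
  have h1 : K • (1 : Matrix (Fin n) (Fin n) ℝ) - C = K • 1 + (-1 : ℝ) • C := by
    rw [neg_one_smul, sub_eq_add_neg]
  rw [h1, conj_unitary_form hC K (-1)]
  have hdg : (diagonal fun i => K + -1 * hC.eigenvalues i).PosSemidef := by
    refine Matrix.PosSemidef.diagonal (Pi.le_def.mpr fun i => ?_)
    have := h i
    simp only [Pi.zero_apply, neg_one_mul]
    linarith
  have := hdg.mul_mul_conjTranspose_same (hC.eigenvectorUnitary : Matrix (Fin n) (Fin n) ℝ)
  rwa [Matrix.star_eq_conjTranspose]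

lemma eig_aff_pos_of_posDef (hC : C.IsHermitian) {a b : ℝ}
    (h : (a • 1 + b • C).PosDef) (i : Fin n) : 0 < a + b * hC.eigenvalues i := by
  set v : Fin n → ℝ := ⇑(hC.eigenvectorBasis i) with hv
  have hv0 : v ≠ 0 := by
    intro h0
    apply hC.eigenvectorBasis.orthonormal.ne_zero i
    ext j
    exact congrFun h0 j
  have hpos := h.dotProduct_mulVec_pos hv0
  have hmv : (a • 1 + b • C) *ᵥ v = a • v + (b * hC.eigenvalues i) • v := by
    rw [Matrix.add_mulVec, Matrix.smul_mulVec, Matrix.smul_mulVec,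
      Matrix.one_mulVec, hC.mulVec_eigenvectorBasis, smul_smul]
  rw [hmv, star_trivial, dotProduct_add, dotProduct_smul, dotProduct_smul,
    smul_eq_mul, smul_eq_mul] at hpos
  have hvv : 0 ≤ v ⬝ᵥ v := Finset.sum_nonneg fun j _ => mul_self_nonneg _
  nlinarith


lemma herm_transpose_eq {V : Matrix (Fin n) (Fin n) ℝ} (hV : V.IsHermitian) : Vᵀ = V := by
  rw [← Matrix.conjTranspose_eq_transpose_of_trivial, hV.eq]

lemma posDef_conj_symm {X V : Matrix (Fin n) (Fin n) ℝ} (hX : X.PosDef)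
    (hV : V.IsHermitian) (hVu : IsUnit V) : (V * X * V).PosDef := by
  refine Matrix.PosDef.of_dotProduct_mulVec_pos ?_ (fun x hx => ?_)
  · show (V * X * V)ᴴ = V * X * V
    rw [Matrix.conjTranspose_mul, Matrix.conjTranspose_mul, hV.eq, hX.1.eq, Matrix.mul_assoc]
  · have hVx : V *ᵥ x ≠ 0 :=
      ((Matrix.mulVec_injective_iff_isUnit.mpr hVu).ne_iff' (by simp)).2 hx
    have h := hX.dotProduct_mulVec_pos hVx
    have key : star x ⬝ᵥ ((V * X * V) *ᵥ x) = star (V *ᵥ x) ⬝ᵥ (X *ᵥ (V *ᵥ x)) := by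
      rw [star_trivial, star_trivial, ← Matrix.mulVec_mulVec, ← Matrix.mulVec_mulVec,
        Matrix.dotProduct_mulVec, ← Matrix.mulVec_transpose, herm_transpose_eq hV]
    rw [key]
    exact h


lemma herm_smul {X : Matrix (Fin n) (Fin n) ℝ} (hX : X.IsHermitian) (r : ℝ) :
    (r • X).IsHermitian := by
  show (r • X)ᴴ = r • X
  rw [Matrix.conjTranspose_smul, star_trivial, hX.eq]

lemma psd_smul {X : Matrix (Fin n) (Fin n) ℝ} {r : ℝ} (hX : X.PosSemidef) (hr : 0 ≤ r) :
    (r • X).PosSemidef := by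
  refine Matrix.PosSemidef.of_dotProduct_mulVec_nonneg (herm_smul hX.1 r) (fun x => ?_)
  rw [Matrix.smul_mulVec, dotProduct_smul, smul_eq_mul]
  exact mul_nonneg hr (hX.dotProduct_mulVec_nonneg x)

open scoped MatrixOrder in
lemma midpoint_logdet {X Y Z : Matrix (Fin n) (Fin n) ℝ} (hX : X.PosDef) (hY : Y.PosDef)
    (hZ : Z.PosDef) (hsum : X + Y = (2:ℝ) • Z) {K : ℝ} (hK : 0 < K)
    (hXK : (K • 1 - X).PosSemidef) (hYK : (K • 1 - Y).PosSemidef) :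
    (Real.log X.det + Real.log Y.det) / 2
      + Matrix.trace ((X - Y) * (X - Y)) / (8 * K ^ 2) ≤ Real.log Z.det := by
  classical
  set W := CFC.sqrt Z with hWdef
  have hWpsd : W.PosSemidef := (CFC.sqrt_nonneg Z).posSemidef
  have hWherm : W.IsHermitian := hWpsd.1
  have hWW : W * W = Z := CFC.sqrt_mul_sqrt_self Z hZ.posSemidef.nonneg
  have hdetZ : 0 < Z.det := hZ.det_pos
  have hdetWW : W.det * W.det = Z.det := by rw [← Matrix.det_mul, hWW]
  have hdetW : W.det ≠ 0 := by
    intro h0; rw [h0, mul_zero] at hdetWW; exact hdetZ.ne (hdetWW)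
  have hWdetU : IsUnit W.det := isUnit_iff_ne_zero.mpr hdetW
  have hWu : IsUnit W := (Matrix.isUnit_iff_isUnit_det W).mpr hWdetU
  set V := W⁻¹ with hVdef
  have hVW : V * W = 1 := Matrix.nonsing_inv_mul W hWdetU
  have hWV : W * V = 1 := Matrix.mul_nonsing_inv W hWdetU
  have hVherm : V.IsHermitian := hWherm.inv
  have hVu : IsUnit V := Matrix.isUnit_nonsing_inv_iff.mpr hWu
  have hVZV : V * Z * V = 1 := by
    rw [← hWW]
    calc V * (W * W) * V = V * W * (W * V) := by simp only [Matrix.mul_assoc]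
      _ = 1 := by rw [hVW, hWV, Matrix.one_mul]
  set C : Matrix (Fin n) (Fin n) ℝ := V * X * V - 1 with hCdef
  have hVXV : V * X * V = (1:ℝ) • (1 : Matrix (Fin n) (Fin n) ℝ) + (1:ℝ) • C := by
    rw [hCdef]; module
  have hY2 : Y = (2:ℝ) • Z - X := by rw [← hsum]; abel
  have hVYV : V * Y * V = (1:ℝ) • (1 : Matrix (Fin n) (Fin n) ℝ) + (-1:ℝ) • C := by
    rw [hY2, Matrix.mul_sub, Matrix.sub_mul, mul_smul_comm, smul_mul_assoc, hVZV, hCdef]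
    module
  have hVXV_pd : (V * X * V).PosDef := posDef_conj_symm hX hVherm hVu
  have hVYV_pd : (V * Y * V).PosDef := posDef_conj_symm hY hVherm hVu
  have hCherm : C.IsHermitian := by
    rw [hCdef]
    show (V * X * V - 1)ᴴ = V * X * V - 1
    rw [Matrix.conjTranspose_sub, hVXV_pd.1.eq, Matrix.conjTranspose_one]
  set c := hCherm.eigenvalues with hcdef
  have hc1 : ∀ i, 0 < 1 + 1 * c i := by
    intro i
    exact eig_aff_pos_of_posDef hCherm (hVXV ▸ hVXV_pd) i
  have hc2 : ∀ i, 0 < 1 + (-1) * c i := by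
    intro i
    exact eig_aff_pos_of_posDef hCherm (hVYV ▸ hVYV_pd) i
  -- decomposition of X and Y
  have hXW : W * (V * X * V) * W = X := by
    simp only [← Matrix.mul_assoc]
    rw [hWV, Matrix.one_mul, Matrix.mul_assoc, hVW, Matrix.mul_one]
  have hYW : W * (V * Y * V) * W = Y := by
    simp only [← Matrix.mul_assoc]
    rw [hWV, Matrix.one_mul, Matrix.mul_assoc, hVW, Matrix.mul_one]
  -- determinants
  have hdetX : X.det = Z.det * ∏ i, (1 + 1 * c i) := by
    rw [← hXW, Matrix.det_mul, Matrix.det_mul, hVXV, det_aff hCherm]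
    rw [← hdetWW]; ring
  have hdetY : Y.det = Z.det * ∏ i, (1 + (-1) * c i) := by
    rw [← hYW, Matrix.det_mul, Matrix.det_mul, hVYV, det_aff hCherm]
    rw [← hdetWW]; ring
  have hprod1 : (0:ℝ) < ∏ i, (1 + 1 * c i) := Finset.prod_pos fun i _ => hc1 i
  have hprod2 : (0:ℝ) < ∏ i, (1 + (-1) * c i) := Finset.prod_pos fun i _ => hc2 i
  have hlogX : Real.log X.det = Real.log Z.det + ∑ i, Real.log (1 + 1 * c i) := by
    rw [hdetX, Real.log_mul hdetZ.ne' hprod1.ne', Real.log_prod]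
    intro i _; exact (hc1 i).ne'
  have hlogY : Real.log Y.det = Real.log Z.det + ∑ i, Real.log (1 + (-1) * c i) := by
    rw [hdetY, Real.log_mul hdetZ.ne' hprod2.ne', Real.log_prod]
    intro i _; exact (hc2 i).ne'
  set S := ∑ i, (c i) ^ 2 with hSdef
  -- log sum bound
  have hlogsum : ∑ i, Real.log (1 + 1 * c i) + ∑ i, Real.log (1 + (-1) * c i) ≤ -S := by
    rw [← Finset.sum_add_distrib, hSdef, ← Finset.sum_neg_distrib]
    apply Finset.sum_le_sum
    intro i _
    have h12 : (0:ℝ) < 1 - c i ^ 2 := by nlinarith [hc1 i, hc2 i]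
    have : Real.log (1 + 1 * c i) + Real.log (1 + (-1) * c i)
        = Real.log (1 - c i ^ 2) := by
      rw [← Real.log_mul (hc1 i).ne' (hc2 i).ne']
      congr 1; ring
    rw [this]
    have := Real.log_le_sub_one_of_pos h12
    linarith
  -- trace bound
  have hXY : X - Y = (2:ℝ) • (W * C * W) := by
    rw [← hXW, ← hYW, ← Matrix.sub_mul, ← Matrix.mul_sub, hVXV, hVYV]
    have inner : ((1:ℝ) • (1 : Matrix (Fin n) (Fin n) ℝ) + (1:ℝ) • C)
        - ((1:ℝ) • 1 + (-1:ℝ) • C) = (2:ℝ) • C := by module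
    rw [inner, mul_smul_comm, smul_mul_assoc]
  have hZK : (K • 1 - Z).PosSemidef := by
    have h2 : K • (1 : Matrix (Fin n) (Fin n) ℝ) - Z
        = (1/2 : ℝ) • ((K • 1 - X) + (K • 1 - Y)) := by
      rw [show (K • (1 : Matrix (Fin n) (Fin n) ℝ) - X) + (K • 1 - Y)
          = (2:ℝ) • (K • 1) - (X + Y) by module, hsum]
      module
    rw [h2]
    exact psd_smul (hXK.add hYK) (by norm_num)
  have htr : Matrix.trace ((X - Y) * (X - Y)) ≤ 4 * K ^ 2 * S := by
    have e1 : (X - Y) * (X - Y) = (4:ℝ) • (W * C * W * (W * C * W)) := by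
      rw [hXY, smul_mul_assoc, mul_smul_comm, smul_smul]
      norm_num
    have e2 : Matrix.trace (W * C * W * (W * C * W)) = Matrix.trace (Z * C * Z * C) := by
      have : W * C * W * (W * C * W) = W * (C * Z * C) * W := by
        rw [← hWW]
        simp only [Matrix.mul_assoc]
      rw [this, Matrix.trace_mul_cycle, ← Matrix.mul_assoc, ← Matrix.mul_assoc, hWW]
    have e3 := key_trace_ineq hZ.posSemidef hCherm hK.le hZK
    rw [trace_sq_eq hCherm, ← hcdef, ← hSdef] at e3
    rw [e1, Matrix.trace_smul, smul_eq_mul, e2]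
    nlinarith
  -- final assembly
  have hK2 : (0:ℝ) < 8 * K ^ 2 := by positivity
  have htr2 : Matrix.trace ((X - Y) * (X - Y)) / (8 * K ^ 2) ≤ S / 2 := by
    rw [div_le_iff₀ hK2]
    nlinarith
  have hS0 : 0 ≤ S := Finset.sum_nonneg fun i _ => sq_nonneg _
  rw [hlogX, hlogY]
  linarith

lemma pd_smul {X : Matrix (Fin n) (Fin n) ℝ} {r : ℝ} (hX : X.PosDef) (hr : 0 < r) :
    (r • X).PosDef := by
  refine Matrix.PosDef.of_dotProduct_mulVec_pos (herm_smul hX.1 r) (fun x hx => ?_)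
  rw [Matrix.smul_mulVec, dotProduct_smul, smul_eq_mul]
  exact mul_pos hr (hX.dotProduct_mulVec_pos hx)

lemma combo_pd {A B : Matrix (Fin n) (Fin n) ℝ} (hA : A.PosDef) (hB : B.PosDef)
    {s : ℝ} (h0 : 0 ≤ s) (h1 : s ≤ 1) : (s • A + (1 - s) • B).PosDef := by
  rcases eq_or_lt_of_le h0 with h|h
  · have : s • A + (1 - s) • B = B := by rw [← h]; module
    rw [this]; exact hB
  · rcases eq_or_lt_of_le h1 with h'|h'
    · have : s • A + (1 - s) • B = A := by rw [h']; module
      rw [this]; exact hA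
    · exact (pd_smul hA h).add (pd_smul hB (by linarith))

lemma combo_loewner {A B : Matrix (Fin n) (Fin n) ℝ} {K : ℝ}
    (hAK : (K • 1 - A).PosSemidef) (hBK : (K • 1 - B).PosSemidef)
    {s : ℝ} (h0 : 0 ≤ s) (h1 : s ≤ 1) :
    (K • 1 - (s • A + (1 - s) • B)).PosSemidef := by
  have : K • (1 : Matrix (Fin n) (Fin n) ℝ) - (s • A + (1 - s) • B)
      = s • (K • 1 - A) + (1 - s) • (K • 1 - B) := by module
  rw [this]
  exact (psd_smul hAK h0).add (psd_smul hBK (by linarith))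

lemma logdet_combo_ge {A B : Matrix (Fin n) (Fin n) ℝ} (hA : A.PosDef) (hB : B.PosDef)
    {K : ℝ} (hK : 0 < K) (hAK : (K • 1 - A).PosSemidef) (hBK : (K • 1 - B).PosSemidef)
    {t : ℝ} (ht0 : 0 ≤ t) (ht1 : t ≤ 1) :
    t * Real.log A.det + (1 - t) * Real.log B.det
      + t * (1 - t) / (2 * K ^ 2) * Matrix.trace ((A - B) * (A - B))
      ≤ Real.log (t • A + (1 - t) • B).det := by
  classical
  set c := Matrix.trace ((A - B) * (A - B)) with hcdef
  have hABherm : (A - B).IsHermitian := hA.1.sub hB.1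
  have hcpsd : ((A - B) * (A - B)).PosSemidef := by
    have := Matrix.posSemidef_conjTranspose_mul_self (A - B)
    rwa [hABherm.eq] at this
  have hc0 : 0 ≤ c := psd_trace_nonneg hcpsd
  set d := c / (8 * K ^ 2) with hddef
  have hK2 : (0:ℝ) < 8 * K ^ 2 := by positivity
  have hd0 : 0 ≤ d := div_nonneg hc0 hK2.le
  set f : ℝ → ℝ := fun s => Real.log (s • A + (1 - s) • B).det with hfdef
  set ψ : ℝ → ℝ :=
    fun s => f s + 4 * d * s ^ 2 - (s * (f 1 + 4 * d) + (1 - s) * f 0) with hψdef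
  -- midpoint superadditivity
  have hmid : ∀ s u : ℝ, 0 ≤ s → s ≤ 1 → 0 ≤ u → u ≤ 1 →
      (ψ s + ψ u) / 2 ≤ ψ ((s + u) / 2) := by
    intro s u hs0 hs1 hu0 hu1
    have hXpd := combo_pd hA hB hs0 hs1
    have hYpd := combo_pd hA hB hu0 hu1
    have hZpd := combo_pd hA hB (by linarith : (0:ℝ) ≤ (s+u)/2) (by linarith : (s+u)/2 ≤ 1)
    have hsum : (s • A + (1 - s) • B) + (u • A + (1 - u) • B)
        = (2:ℝ) • (((s+u)/2) • A + (1 - (s+u)/2) • B) := by module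
    have hXY : (s • A + (1 - s) • B) - (u • A + (1 - u) • B) = (s - u) • (A - B) := by
      module
    have hmp := midpoint_logdet hXpd hYpd hZpd hsum hK
      (combo_loewner hAK hBK hs0 hs1) (combo_loewner hAK hBK hu0 hu1)
    rw [hXY] at hmp
    have htr : Matrix.trace (((s - u) • (A - B)) * ((s - u) • (A - B)))
        = (s - u) ^ 2 * c := by
      rw [smul_mul_assoc, mul_smul_comm, smul_smul, Matrix.trace_smul, smul_eq_mul, hcdef]
      ring
    rw [htr] at hmp
    have e1 : (s - u) ^ 2 * c / (8 * K ^ 2) = d * (s - u) ^ 2 := by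
      rw [hddef]; field_simp
    rw [e1] at hmp
    -- hmp : (f s + f u)/2 + d*(s-u)^2 ≤ f ((s+u)/2)
    simp only [hψdef]
    nlinarith [hmp]
  -- ψ vanishes at endpoints
  have hψ0 : ψ 0 = 0 := by simp [hψdef]
  have hψ1 : ψ 1 = 0 := by simp [hψdef]
  -- dyadic points
  have hdyadic : ∀ m : ℕ, ∀ k : ℕ, k ≤ 2 ^ m → 0 ≤ ψ ((k : ℝ) / 2 ^ m) := by
    intro m
    induction m with
    | zero =>
      intro k hk
      interval_cases k
      · simpa using hψ0.ge
      · simpa using hψ1.ge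
    | succ m ih =>
      intro k hk
      have h2m : (0:ℝ) < 2 ^ m := by positivity
      rcases Nat.even_or_odd k with ⟨j, hj⟩ | ⟨j, hj⟩
      · have hj2 : j ≤ 2 ^ m := by omega
        have : ((k : ℝ) / 2 ^ (m+1)) = (j : ℝ) / 2 ^ m := by
          subst hj; push_cast; field_simp; ring
        rw [this]
        exact ih j hj2
      · have hj2 : j + 1 ≤ 2 ^ m := by omega
        have hs := ih j (by omega)
        have hu := ih (j+1) hj2
        push_cast at hu
        have hsmem0 : (0:ℝ) ≤ (j : ℝ) / 2 ^ m := by positivity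
        have hsmem1 : (j : ℝ) / 2 ^ m ≤ 1 := by
          rw [div_le_one h2m]
          exact_mod_cast Nat.le_of_succ_le (by omega)
        have humem0 : (0:ℝ) ≤ ((j:ℝ)+1) / 2 ^ m := by positivity
        have humem1 : ((j:ℝ)+1) / 2 ^ m ≤ 1 := by
          rw [div_le_one h2m]
          exact_mod_cast hj2
        have hmid' := hmid _ _ hsmem0 hsmem1 humem0 humem1
        have heq : (((j:ℝ) / 2 ^ m) + (((j:ℝ)+1) / 2 ^ m)) / 2 = (k : ℝ) / 2 ^ (m+1) := by
          subst hj; push_cast; field_simp; ring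
        rw [heq] at hmid'
        linarith
  -- continuity of ψ on [0,1]
  have hψcont : ContinuousOn ψ (Set.Icc (0:ℝ) 1) := by
    have hMcont : Continuous (fun s : ℝ => s • A + (1 - s) • B) := by
      apply Continuous.add
      · exact continuous_id.smul continuous_const
      · exact (continuous_const.sub continuous_id).smul continuous_const
    have hdetcont : Continuous (fun s : ℝ => (s • A + (1 - s) • B).det) :=
      hMcont.matrix_det
    have hfcont : ContinuousOn f (Set.Icc (0:ℝ) 1) := by
      apply ContinuousOn.log hdetcont.continuousOn
      intro x hx
      exact (combo_pd hA hB hx.1 hx.2).det_pos.ne'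
    apply ContinuousOn.sub
    · exact hfcont.add (continuousOn_const.mul ((continuous_pow 2).continuousOn))
    · fun_prop
  -- pass to the limit
  have hψt : 0 ≤ ψ t := by
    set a : ℕ → ℝ := fun m => (⌊t * 2 ^ m⌋₊ : ℝ) / 2 ^ m with hadef
    have ha_mem : ∀ m, a m ∈ Set.Icc (0:ℝ) 1 := by
      intro m
      have h2m : (0:ℝ) < 2 ^ m := by positivity
      constructor
      · positivity
      · rw [div_le_one h2m]
        have : t * 2 ^ m ≤ 2 ^ m := by nlinarith
        calc (⌊t * 2 ^ m⌋₊ : ℝ) ≤ t * 2 ^ m := Nat.floor_le (by positivity)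
          _ ≤ 2 ^ m := this
    have ha_nonneg : ∀ m, 0 ≤ ψ (a m) := by
      intro m
      apply hdyadic m
      have h2m : (0:ℝ) < 2 ^ m := by positivity
      have : t * 2 ^ m ≤ ((2 ^ m : ℕ) : ℝ) := by push_cast; nlinarith
      calc ⌊t * 2 ^ m⌋₊ ≤ ⌊((2 ^ m : ℕ) : ℝ)⌋₊ := Nat.floor_le_floor this
        _ = 2 ^ m := Nat.floor_natCast _
    have ha_tend : Filter.Tendsto a Filter.atTop (nhds t) := by
      have hlow : ∀ m, t - (1/2) ^ m ≤ a m := by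
        intro m
        have h2m : (0:ℝ) < 2 ^ m := by positivity
        rw [hadef]
        have h1 : t * 2 ^ m < ⌊t * 2 ^ m⌋₊ + 1 := Nat.lt_floor_add_one _
        rw [le_div_iff₀ h2m]
        have : (1/2:ℝ) ^ m * 2 ^ m = 1 := by
          rw [← mul_pow]; norm_num
        nlinarith
      have hhigh : ∀ m, a m ≤ t := by
        intro m
        have h2m : (0:ℝ) < 2 ^ m := by positivity
        rw [hadef, div_le_iff₀ h2m]
        exact Nat.floor_le (by positivity)
      have htendlow : Filter.Tendsto (fun m : ℕ => t - (1/2:ℝ) ^ m) Filter.atTop (nhds t) := by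
        have : Filter.Tendsto (fun m : ℕ => (1/2:ℝ) ^ m) Filter.atTop (nhds 0) := by
          apply tendsto_pow_atTop_nhds_zero_of_lt_one <;> norm_num
        simpa using Filter.Tendsto.sub (tendsto_const_nhds (x := t)) this
      exact tendsto_of_tendsto_of_tendsto_of_le_of_le htendlow tendsto_const_nhds hlow hhigh
    have htmem : t ∈ Set.Icc (0:ℝ) 1 := ⟨ht0, ht1⟩
    have hcomp : Filter.Tendsto (fun m => ψ (a m)) Filter.atTop (nhds (ψ t)) := by
      apply (hψcont t htmem).tendsto.comp
      apply tendsto_nhdsWithin_of_tendsto_nhds_of_eventually_within a ha_tend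
      exact Filter.Eventually.of_forall ha_mem
    exact ge_of_tendsto hcomp (Filter.Eventually.of_forall ha_nonneg)
  -- unfold ψ t
  have hf1 : f 1 = Real.log A.det := by
    simp only [hfdef]
    norm_num
  have hf0 : f 0 = Real.log B.det := by
    simp only [hfdef]
    norm_num
  have hfinal : 4 * d * (t - t ^ 2) = t * (1 - t) / (2 * K ^ 2) * c := by
    rw [hddef]; field_simp; ring
  simp only [hψdef, hf1, hf0] at hψt
  rw [hf1, hf0] at *
  nlinarith [hψt]


/-- Courtade et al., Lemma 15: lower bound for `log det` of a convex
combination of positive definite real symmetric matrices. -/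
theorem stmt_4 {n : ℕ} (A B : Matrix (Fin n) (Fin n) ℝ)
    (hA : A.PosDef) (hB : B.PosDef) (t : ℝ) (ht : t ∈ Set.Icc (0:ℝ) 1) :
    Real.log (t • A + (1 - t) • B).det
      ≥ t * Real.log A.det + (1 - t) * Real.log B.det
        + t * (1 - t) / (2 * max ((⨆ i, hA.1.eigenvalues i)^2) ((⨆ i, hB.1.eigenvalues i)^2))
          * Matrix.trace ((A - B)ᵀ * (A - B)) := by
  obtain ⟨ht0, ht1⟩ := ht
  rcases Nat.eq_zero_or_pos n with hn | hn
  · subst hn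
    simp [Matrix.det_fin_zero, Matrix.trace]
  · haveI : Nonempty (Fin n) := ⟨⟨0, hn⟩⟩
    set KA := ⨆ i, hA.1.eigenvalues i with hKA
    set KB := ⨆ i, hB.1.eigenvalues i with hKB
    have hbddA : BddAbove (Set.range hA.1.eigenvalues) :=
      Set.Finite.bddAbove (Set.finite_range _)
    have hbddB : BddAbove (Set.range hB.1.eigenvalues) :=
      Set.Finite.bddAbove (Set.finite_range _)
    have hKApos : 0 < KA :=
      lt_of_lt_of_le (hA.eigenvalues_pos (Classical.arbitrary _)) (le_ciSup hbddA _)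
    have hKBpos : 0 < KB :=
      lt_of_lt_of_le (hB.eigenvalues_pos (Classical.arbitrary _)) (le_ciSup hbddB _)
    set K := max KA KB with hKdef
    have hKpos : 0 < K := lt_max_of_lt_left hKApos
    have hAK : (K • 1 - A).PosSemidef :=
      loewner_of_eig_le hA.1 (fun i => le_trans (le_ciSup hbddA i) (le_max_left _ _))
    have hBK : (K • 1 - B).PosSemidef :=
      loewner_of_eig_le hB.1 (fun i => le_trans (le_ciSup hbddB i) (le_max_right _ _))
    have hmax : max (KA^2) (KB^2) = K^2 := by
      rcases le_total KA KB with h | h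
      · rw [hKdef, max_eq_right h, max_eq_right (by nlinarith : KA^2 ≤ KB^2)]
      · rw [hKdef, max_eq_left h, max_eq_left (by nlinarith : KB^2 ≤ KA^2)]
    have htr : Matrix.trace ((A - B)ᵀ * (A - B)) = Matrix.trace ((A - B) * (A - B)) := by
      rw [herm_transpose_eq (hA.1.sub hB.1)]
    rw [ge_iff_le, htr, hmax]
    exact logdet_combo_ge hA hB hKpos hAK hBK ht0 ht1
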